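/- Let q be a polynomial with an attracting fixed point z_0 in the open unit disk, i.e., q(z_0) = z_0 and |q'(z_0)| < 1. Then for every ε > 0 there is N such that for all n ≥ N, f_n(z) = z^n + q(z) has a fixed point z_n with |z_n − z_0| < ε and |f_n'(z_n)| < 1. -/

import Mathlib

open Polynomial

/-- if `q` has an attracting fixed point `z₀` in the open unit disk,
then for every `ε > 0` and all large `n`, `f_n(z) = z^n + q(z)` has a fixed point
`z_n` within `ε` of `z₀` with `|f_n'(z_n)| < 1`. -/
theorem attracting_fixed_point_persists (q : Polynomial ℂ) (z₀ : ℂ)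
    (hfix : q.eval z₀ = z₀) (hz₀ : ‖z₀‖ < 1)
    (hattr : ‖q.derivative.eval z₀‖ < 1) :
    ∀ ε > (0 : ℝ), ∃ N : ℕ, ∀ n ≥ N, ∃ zn : ℂ,
      zn ^ n + q.eval zn = zn ∧ ‖zn - z₀‖ < ε ∧
      ‖(n : ℂ) * zn ^ (n - 1) + q.derivative.eval zn‖ < 1 := by
  set a : ℝ := ‖q.derivative.eval z₀‖ with ha
  set c : ℝ := (1 + a) / 2 with hc
  have ha0 : 0 ≤ a := norm_nonneg _
  have hac : a < c := by rw [hc]; linarith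
  have hc1 : c < 1 := by rw [hc]; linarith
  have hc0 : 0 < c := by rw [hc]; linarith
  -- continuity of the derivative: find r₁ > 0 such that ‖q'‖ < c on ball z₀ r₁
  have hcont : ContinuousAt (fun z => ‖q.derivative.eval z‖) z₀ :=
    (q.derivative.continuous_aeval.norm).continuousAt
  obtain ⟨r₁, hr₁0, hr₁⟩ : ∃ r₁ > 0, ∀ z ∈ Metric.ball z₀ r₁,
      ‖q.derivative.eval z‖ < c := by
    have := hcont.eventually (p := fun x => x < c) (Filter.Tendsto.eventually_lt_const hac
      Filter.tendsto_id)
    rcases Metric.eventually_nhds_iff_ball.mp this with ⟨δ, hδ, h⟩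
    exact ⟨δ, hδ, h⟩
  set r₀ : ℝ := min (r₁ / 2) ((1 - ‖z₀‖) / 2) with hr₀def
  have hr₀0 : 0 < r₀ := lt_min (by linarith) (by linarith)
  set ρ : ℝ := ‖z₀‖ + r₀ with hρdef
  have hρ0 : 0 < ρ := lt_of_lt_of_le hr₀0 (le_add_of_nonneg_left (norm_nonneg _))
  have hρ1 : ρ < 1 := by
    have : r₀ ≤ (1 - ‖z₀‖) / 2 := min_le_right _ _
    rw [hρdef]; linarith
  have hderiv_lt : ∀ z ∈ Metric.closedBall z₀ r₀, ‖q.derivative.eval z‖ < c := by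
    intro z hz
    apply hr₁
    rw [Metric.mem_closedBall] at hz
    rw [Metric.mem_ball]
    calc dist z z₀ ≤ r₀ := hz
      _ ≤ r₁ / 2 := min_le_left _ _
      _ < r₁ := by linarith
  intro ε hε
  set r : ℝ := min r₀ (ε / 2) with hrdef
  have hr0 : 0 < r := lt_min hr₀0 (by linarith)
  have hrε : r < ε := lt_of_le_of_lt (min_le_right _ _) (by linarith)
  have hrr₀ : r ≤ r₀ := min_le_left _ _
  set s : Set ℂ := Metric.closedBall z₀ r with hsdef
  have hz₀s : z₀ ∈ s := Metric.mem_closedBall_self hr0.le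
  have hnorm_le : ∀ z ∈ s, ‖z‖ ≤ ρ := by
    intro z hz
    rw [hsdef, Metric.mem_closedBall, dist_eq_norm] at hz
    calc ‖z‖ = ‖z - z₀ + z₀‖ := by ring_nf
      _ ≤ ‖z - z₀‖ + ‖z₀‖ := norm_add_le _ _
      _ ≤ r + ‖z₀‖ := by linarith
      _ ≤ ρ := by rw [hρdef]; linarith [hrr₀]
  have hderiv_s : ∀ z ∈ s, ‖q.derivative.eval z‖ < c := fun z hz =>
    hderiv_lt z (Metric.closedBall_subset_closedBall hrr₀ hz)
  -- choose N
  have hT : Filter.Tendsto (fun n : ℕ => (n : ℝ) * ρ ^ n / ρ) Filter.atTop (nhds 0) := by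
    have := tendsto_pow_const_mul_const_pow_of_lt_one 1 hρ0.le hρ1
    simpa using this.div_const ρ
  have hT2 : Filter.Tendsto (fun n : ℕ => ρ ^ n) Filter.atTop (nhds 0) :=
    tendsto_pow_atTop_nhds_zero_of_lt_one hρ0.le hρ1
  have h1 : ∀ᶠ n : ℕ in Filter.atTop, (n : ℝ) * ρ ^ n / ρ < (1 - c) / 2 :=
    hT.eventually_lt_const (by linarith)
  have h2 : ∀ᶠ n : ℕ in Filter.atTop, ρ ^ n < (1 - c) * r :=
    hT2.eventually_lt_const (mul_pos (by linarith) hr0)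
  have h3 : ∀ᶠ n : ℕ in Filter.atTop, 1 ≤ n := Filter.eventually_atTop.mpr ⟨1, fun n h => h⟩
  obtain ⟨N, hN⟩ := Filter.eventually_atTop.mp ((h1.and h2).and h3)
  refine ⟨N, fun n hn => ?_⟩
  obtain ⟨⟨hn1, hn2⟩, hn3⟩ := hN n hn
  obtain ⟨m, rfl⟩ : ∃ m, n = m + 1 := ⟨n - 1, (Nat.succ_pred_eq_of_pos hn3).symm⟩
  set n := m + 1 with hndef
  -- key bound on the derivative of f_n on s
  have hρpow : (n : ℝ) * ρ ^ (n - 1) < (1 - c) / 2 := by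
    have e : (n : ℝ) * ρ ^ n / ρ = (n : ℝ) * ρ ^ (n - 1) := by
      rw [hndef, Nat.add_sub_cancel, pow_succ]
      field_simp
    rwa [e] at hn1
  have hDbound : ∀ z ∈ s, ‖(n : ℂ) * z ^ (n - 1) + q.derivative.eval z‖ < 1 := by
    intro z hz
    have hz1 : ‖(n : ℂ) * z ^ (n - 1)‖ ≤ (n : ℝ) * ρ ^ (n - 1) := by
      rw [norm_mul, norm_pow, Complex.norm_natCast]
      gcongr
      exact hnorm_le z hz
    calc ‖(n : ℂ) * z ^ (n - 1) + q.derivative.eval z‖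
        ≤ ‖(n : ℂ) * z ^ (n - 1)‖ + ‖q.derivative.eval z‖ := norm_add_le _ _
      _ < (1 - c) / 2 + c := by
          have := hderiv_s z hz
          linarith [lt_of_le_of_lt hz1 hρpow]
      _ < 1 := by linarith
  -- f_n and its derivative
  set f : ℂ → ℂ := fun z => z ^ n + q.eval z with hfdef
  have hf' : ∀ z : ℂ, HasDerivAt f ((n : ℂ) * z ^ (n - 1) + q.derivative.eval z) z := by
    intro z
    exact (hasDerivAt_pow n z).add (q.hasDerivAt z)
  have hconv : Convex ℝ s := convex_closedBall _ _
  set C : ℝ := (1 + c) / 2 with hCdef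
  have hC1 : C < 1 := by rw [hCdef]; linarith
  have hC0 : 0 < C := by rw [hCdef]; linarith
  have hDboundC : ∀ z ∈ s, ‖(n : ℂ) * z ^ (n - 1) + q.derivative.eval z‖ ≤ C := by
    intro z hz
    have hz1 : ‖(n : ℂ) * z ^ (n - 1)‖ ≤ (n : ℝ) * ρ ^ (n - 1) := by
      rw [norm_mul, norm_pow, Complex.norm_natCast]
      gcongr
      exact hnorm_le z hz
    calc ‖(n : ℂ) * z ^ (n - 1) + q.derivative.eval z‖
        ≤ ‖(n : ℂ) * z ^ (n - 1)‖ + ‖q.derivative.eval z‖ := norm_add_le _ _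
      _ ≤ (1 - c) / 2 + c := by
          have := hderiv_s z hz
          linarith [lt_of_le_of_lt hz1 hρpow]
      _ = C := by rw [hCdef]; ring
  have hlip : ∀ x ∈ s, ∀ y ∈ s, ‖f y - f x‖ ≤ C * ‖y - x‖ := by
    intro x hx y hy
    exact hconv.norm_image_sub_le_of_norm_hasDerivWithin_le
      (fun z hz => (hf' z).hasDerivWithinAt) hDboundC hx hy
  -- q is c-Lipschitz on s
  have hqlip : ∀ x ∈ s, ∀ y ∈ s, ‖q.eval y - q.eval x‖ ≤ c * ‖y - x‖ := by
    intro x hx y hy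
    exact hconv.norm_image_sub_le_of_norm_hasDerivWithin_le
      (fun z hz => (q.hasDerivAt z).hasDerivWithinAt)
      (fun z hz => (hderiv_s z hz).le) hx hy
  -- f maps s into s
  have hmaps : ∀ z ∈ s, f z ∈ s := by
    intro z hz
    rw [hsdef, Metric.mem_closedBall, dist_eq_norm]
    have h1 : ‖z ^ n‖ ≤ ρ ^ n := by
      rw [norm_pow]; exact pow_le_pow_left₀ (norm_nonneg _) (hnorm_le z hz) _
    have h2 : ‖q.eval z - z₀‖ = ‖q.eval z - q.eval z₀‖ := by rw [hfix]
    have h3 : ‖q.eval z - q.eval z₀‖ ≤ c * ‖z - z₀‖ := hqlip z₀ hz₀s z hz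
    have h4 : ‖z - z₀‖ ≤ r := by
      rw [hsdef, Metric.mem_closedBall, dist_eq_norm] at hz; exact hz
    calc ‖f z - z₀‖ = ‖z ^ n + (q.eval z - z₀)‖ := by rw [hfdef]; ring_nf
      _ ≤ ‖z ^ n‖ + ‖q.eval z - z₀‖ := norm_add_le _ _
      _ ≤ ρ ^ n + c * ‖z - z₀‖ := by rw [h2]; linarith
      _ ≤ (1 - c) * r + c * r := by
          have : c * ‖z - z₀‖ ≤ c * r := by gcongr
          linarith
      _ = r := by ring
  -- Banach fixed point on the closed ball
  haveI : Nonempty s := ⟨⟨z₀, hz₀s⟩⟩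
  haveI : CompleteSpace s := Metric.isClosed_closedBall.completeSpace_coe
  set F : s → s := fun z => ⟨f z.1, hmaps z.1 z.2⟩ with hFdef
  have hcontr : ContractingWith C.toNNReal F := by
    constructor
    · rw [← NNReal.coe_lt_one, Real.coe_toNNReal _ hC0.le]; exact hC1
    · apply LipschitzWith.of_dist_le_mul
      intro x y
      have := hlip y.1 y.2 x.1 x.2
      simp only [hFdef, Subtype.dist_eq, dist_eq_norm]
      rwa [Real.coe_toNNReal _ hC0.le]
  set zn : s := ContractingWith.fixedPoint F hcontr with hzndef
  have hzn : F zn = zn := hcontr.fixedPoint_isFixedPt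
  refine ⟨zn.1, ?_, ?_, hDbound zn.1 zn.2⟩
  · have := congrArg Subtype.val hzn
    simpa [hFdef, hfdef] using this
  · have h4 : dist (zn : ℂ) z₀ ≤ r := zn.2
    rw [dist_eq_norm] at h4
    linarith
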